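/- Let r ≥ 2 and let p be an integer with p ≥ r. Then for u, w ∈ S_r one has u•δ − w•δ ∈ pQ_r if and only if u = w. -/
import Mathlib


open Finset

noncomputable section

/-- Inner product `⟨u,v⟩ = Σ_i u i * v i` on `ℚ^r`. -/
def ip {r : ℕ} (u v : Fin r → ℚ) : ℚ := ∑ i, u i * v i

/-- Action of `S_r` permuting coordinates: `(w • v) i = v (w⁻¹ i)`. -/
def pact {r : ℕ} (w : Equiv.Perm (Fin r)) (v : Fin r → ℚ) : Fin r → ℚ := fun i => v (w⁻¹ i)

/-- The Weyl vector `δ`, whose (1-indexed) `i`-th coordinate is `(r+1-2i)/2`. -/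
def weylδ (r : ℕ) : Fin r → ℚ := fun j => ((r : ℚ) - 1 - 2 * ((j : ℕ) : ℚ)) / 2

/-- Membership in `V = {v : Fin r → ℚ | Σ_i v i = 0}`. -/
def memV {r : ℕ} (v : Fin r → ℚ) : Prop := ∑ i, v i = 0

/-- Membership in the root lattice `Q_r`. -/
def memQ {r : ℕ} (v : Fin r → ℚ) : Prop := memV v ∧ ∀ i, ∃ m : ℤ, v i = (m : ℚ)

/-- Membership in the weight lattice `P_r`. -/
def memP {r : ℕ} (v : Fin r → ℚ) : Prop := memV v ∧ ∀ i j, ∃ m : ℤ, v i - v j = (m : ℚ)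

/-- The first fundamental weight `Λ₁ = ε₁ - (1/r)(ε₁ + ⋯ + ε_r)`. -/
def Lam1 (r : ℕ) : Fin r → ℚ := fun j => (if (j : ℕ) = 0 then 1 else 0) - 1 / (r : ℚ)

/-- The simple roots, 0-indexed: `srootF i = ε_{i+1} - ε_{i+2}` in 1-indexed notation. -/
def srootF {r : ℕ} (i : Fin (r - 1)) : Fin r → ℚ :=
  fun j => (if (j : ℕ) = (i : ℕ) then 1 else 0) - (if (j : ℕ) = (i : ℕ) + 1 then 1 else 0)

/-- The highest root `θ = ε₁ - ε_r`. -/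
def hroot (r : ℕ) : Fin r → ℚ :=
  fun j => (if (j : ℕ) = 0 then 1 else 0) - (if (j : ℕ) = r - 1 then 1 else 0)

/-- The set `Π_{r,n}` of weights of `L_r(nΛ₁)`:
all `nΛ₁ - a₁α₁ - ⋯ - a_{r-1}α_{r-1}` with `n ≥ a₁ ≥ ⋯ ≥ a_{r-1} ≥ 0`. -/
def PiWts (r n : ℕ) : Set (Fin r → ℚ) :=
  {v | ∃ a : Fin (r - 1) → ℤ, (∀ i, 0 ≤ a i) ∧ (∀ i, a i ≤ (n : ℤ)) ∧
        (∀ i j, i ≤ j → a j ≤ a i) ∧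
        v = (n : ℚ) • Lam1 r - ∑ i, (a i : ℚ) • srootF i}

/-- for `p ≥ r`, `u•δ - w•δ ∈ pQ_r` iff `u = w`. -/
theorem stmt10 (r p : ℕ) (hr : 2 ≤ r) (hp : r ≤ p) (u w : Equiv.Perm (Fin r)) :
    (∃ β, memQ β ∧ pact u (weylδ r) - pact w (weylδ r) = (p : ℚ) • β) ↔ u = w := by
  constructor
  · rintro ⟨β, ⟨_, hβint⟩, heq⟩
    have hinv : u⁻¹ = w⁻¹ := by
      ext i
      have h := congrFun heq i
      simp only [pact, Pi.sub_apply, Pi.smul_apply, smul_eq_mul, weylδ] at h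
      obtain ⟨m, hm⟩ := hβint i
      rw [hm] at h
      set a : ℕ := (u⁻¹ i : ℕ) with ha
      set b : ℕ := (w⁻¹ i : ℕ) with hb
      have h2 : (b : ℚ) - (a : ℚ) = (p : ℚ) * m := by
        field_simp at h
        linarith
      have h3 : (b : ℤ) - (a : ℤ) = (p : ℤ) * m := by
        exact_mod_cast h2
      have hab : (b : ℤ) - (a : ℤ) = 0 := by
        have ha' : a < r := (u⁻¹ i).isLt
        have hb' : b < r := (w⁻¹ i).isLt
        have hbound : |(b : ℤ) - (a : ℤ)| < (p : ℤ) := by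
          rw [abs_sub_lt_iff]
          omega
        rw [h3] at hbound ⊢
        rw [abs_mul, abs_of_nonneg (by positivity : (0:ℤ) ≤ (p:ℤ))] at hbound
        have hp0 : (0:ℤ) < p := by omega
        have : |m| < 1 := by
          by_contra hc
          push_neg at hc
          nlinarith
        have hm0 : m = 0 := Int.abs_lt_one_iff.mp this
        simp [hm0]
      have : a = b := by omega
      exact this
    have := congrArg (·⁻¹) hinv
    simpa using this
  · rintro rfl
    exact ⟨0, ⟨by simp [memV], fun i => ⟨0, by simp⟩⟩, by simp⟩
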